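/- Let m be a game such that its core C(m) is nonempty and all vertices of C(m) are 0–1 vectors, and suppose m is standardized supermodular. Then m is integer-valued and m(N) − m(N∖{i}) ≤ 1 for every i ∈ N. Conversely, if m is standardized supermodular, integer-valued, and m(N) − m(N∖{i}) ≤ 1 for all i, then every vertex of C(m) is a 0–1 vector. -/

import Mathlib

open Finset

/-- A game is supermodular if `m A + m B ≤ m (A ∪ B) + m (A ∩ B)` for all `A, B`. -/
def Supermod {N : Type*} [DecidableEq N] (m : Finset N → ℝ) : Prop :=
  ∀ A B : Finset N, m A + m B ≤ m (A ∪ B) + m (A ∩ B)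

/-- The core of a game. -/
def core {N : Type*} [Fintype N] [DecidableEq N] (m : Finset N → ℝ) : Set (N → ℝ) :=
  {v | ∑ i, v i = m Finset.univ ∧ ∀ S : Finset N, m S ≤ ∑ i ∈ S, v i}

set_option linter.unusedSectionVars false

section Marg

variable {N : Type*} [DecidableEq N]

/-- The marginal vector along a list; the head of the list is the *last* player added. -/
noncomputable def marg (m : Finset N → ℝ) : List N → N → ℝ
  | [] => fun _ => 0
  | a :: l => fun i => if i = a then m (a :: l).toFinset - m l.toFinset else marg m l i

lemma marg_append (m : Finset N → ℝ) (l₁ l₂ : List N) (i : N) (hi : i ∉ l₁) :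
    marg m (l₁ ++ l₂) i = marg m l₂ i := by
  induction l₁ with
  | nil => rfl
  | cons a l ih =>
      simp only [List.mem_cons, not_or] at hi
      simp only [List.cons_append, marg, if_neg hi.1]
      exact ih hi.2

lemma marg_sum (m : Finset N → ℝ) (l : List N) (hl : l.Nodup) :
    ∑ i ∈ l.toFinset, marg m l i = m l.toFinset - m ∅ := by
  induction l with
  | nil => simp [marg]
  | cons a l ih =>
      have ha : a ∉ l := (List.nodup_cons.1 hl).1
      have ha' : a ∉ l.toFinset := by simpa using ha
      have htf : (a :: l).toFinset = insert a l.toFinset := by simp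
      rw [htf, Finset.sum_insert ha']
      have h1 : marg m (a :: l) a = m (a :: l).toFinset - m l.toFinset := by
        simp [marg]
      have h2 : ∀ i ∈ l.toFinset, marg m (a :: l) i = marg m l i := by
        intro i hi
        have : i ≠ a := by rintro rfl; exact ha' hi
        simp [marg, this]
      rw [h1, Finset.sum_congr rfl h2, ih (List.nodup_cons.1 hl).2, htf]
      ring

lemma marg_core_ineq (m : Finset N → ℝ) (hsup : Supermod m) (h0 : m ∅ = 0)
    (l : List N) (hl : l.Nodup) (T : Finset N) :
    m (T ∩ l.toFinset) ≤ ∑ i ∈ T ∩ l.toFinset, marg m l i := by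
  induction l with
  | nil => simp [h0]
  | cons a l ih =>
      have ha : a ∉ l := (List.nodup_cons.1 hl).1
      have ha' : a ∉ l.toFinset := by simpa using ha
      have ihl := ih (List.nodup_cons.1 hl).2
      have htf : (a :: l).toFinset = insert a l.toFinset := by simp
      have h2 : ∀ i ∈ T ∩ l.toFinset, marg m (a :: l) i = marg m l i := by
        intro i hi
        have : i ≠ a := by rintro rfl; exact ha' (Finset.mem_inter.1 hi).2
        simp [marg, this]
      by_cases haT : a ∈ T
      · have hTi : T ∩ (a :: l).toFinset = insert a (T ∩ l.toFinset) := by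
          rw [htf, Finset.inter_insert_of_mem haT]
        have haTl : a ∉ T ∩ l.toFinset := fun h => ha' (Finset.mem_inter.1 h).2
        rw [hTi, Finset.sum_insert haTl]
        have h1 : marg m (a :: l) a = m (a :: l).toFinset - m l.toFinset := by
          simp [marg]
        rw [h1, Finset.sum_congr rfl h2]
        have hsm := hsup (insert a (T ∩ l.toFinset)) l.toFinset
        have hu : insert a (T ∩ l.toFinset) ∪ l.toFinset = (a :: l).toFinset := by
          rw [htf, Finset.insert_union, Finset.union_eq_right.mpr Finset.inter_subset_right]
        have hi2 : insert a (T ∩ l.toFinset) ∩ l.toFinset = T ∩ l.toFinset := by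
          rw [Finset.insert_inter_of_notMem ha', Finset.inter_assoc, Finset.inter_self]
        rw [hu, hi2] at hsm
        linarith
      · have hTi : T ∩ (a :: l).toFinset = T ∩ l.toFinset := by
          rw [htf, Finset.inter_insert_of_notMem haT]
        rw [hTi, Finset.sum_congr rfl h2]
        exact ihl

end Marg

section CoreFacts

variable {N : Type*} [Fintype N] [DecidableEq N]

lemma core_nonneg {m : Finset N → ℝ} (hstd : ∀ S : Finset N, S.card ≤ 1 → m S = 0)
    {v : N → ℝ} (hv : v ∈ core m) (i : N) : 0 ≤ v i := by
  have := hv.2 {i}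
  rwa [Finset.sum_singleton, hstd {i} (by simp)] at this

lemma core_le {m : Finset N → ℝ} (hstd : ∀ S : Finset N, S.card ≤ 1 → m S = 0)
    {v : N → ℝ} (hv : v ∈ core m) (i : N) : v i ≤ m Finset.univ := by
  have h1 : ∑ j ∈ Finset.univ.erase i, v j + v i = ∑ j, v j :=
    Finset.sum_erase_add _ _ (Finset.mem_univ i)
  have h2 : (0:ℝ) ≤ ∑ j ∈ Finset.univ.erase i, v j :=
    Finset.sum_nonneg fun j _ => core_nonneg hstd hv j
  have := hv.1
  linarith

lemma core_isClosed (m : Finset N → ℝ) : IsClosed (core m) := by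
  have h1 : IsClosed {v : N → ℝ | ∑ i, v i = m Finset.univ} :=
    isClosed_eq (by fun_prop) continuous_const
  have h2 : IsClosed (⋂ S : Finset N, {v : N → ℝ | m S ≤ ∑ i ∈ S, v i}) :=
    isClosed_iInter fun S => isClosed_le continuous_const (by fun_prop)
  have : core m = {v : N → ℝ | ∑ i, v i = m Finset.univ} ∩
      (⋂ S : Finset N, {v : N → ℝ | m S ≤ ∑ i ∈ S, v i}) := by
    ext v; simp [core, Set.mem_iInter]
  rw [this]; exact h1.inter h2

lemma core_isCompact (m : Finset N → ℝ)
    (hstd : ∀ S : Finset N, S.card ≤ 1 → m S = 0) : IsCompact (core m) := by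
  apply Metric.isCompact_of_isClosed_isBounded (core_isClosed m)
  rw [isBounded_iff_forall_norm_le]
  refine ⟨|m Finset.univ|, fun v hv => ?_⟩
  rw [pi_norm_le_iff_of_nonneg (abs_nonneg _)]
  intro i
  rw [Real.norm_eq_abs, abs_le]
  constructor
  · have := core_nonneg hstd hv i
    have : -|m Finset.univ| ≤ 0 := neg_nonpos.mpr (abs_nonneg _); linarith
  · exact (core_le hstd hv i).trans (le_abs_self _)

lemma exists_extreme_sum_eq (m : Finset N → ℝ)
    (hstd : ∀ S : Finset N, S.card ≤ 1 → m S = 0) (S : Finset N)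
    (hex : ∃ v ∈ core m, ∑ i ∈ S, v i = m S) :
    ∃ w ∈ Set.extremePoints ℝ (core m), ∑ i ∈ S, w i = m S := by
  obtain ⟨v₀, hv₀, hv₀S⟩ := hex
  set l : (N → ℝ) →L[ℝ] ℝ :=
    -(∑ i ∈ S, ContinuousLinearMap.proj (R := ℝ) (φ := fun _ : N => ℝ) i) with hl
  have hlapp : ∀ y : N → ℝ, l y = -∑ i ∈ S, y i := by
    intro y
    simp [hl, ContinuousLinearMap.sum_apply]
  have hexp : IsExposed ℝ (core m) (l.toExposed (core m)) :=
    ContinuousLinearMap.toExposed.isExposed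
  have hF : l.toExposed (core m) = {x ∈ core m | ∑ i ∈ S, x i = m S} := by
    ext x
    constructor
    · rintro ⟨hx, hmax⟩
      refine ⟨hx, le_antisymm ?_ (hx.2 S)⟩
      have := hmax v₀ hv₀
      rw [hlapp, hlapp, hv₀S] at this
      linarith
    · rintro ⟨hx, heq⟩
      refine ⟨hx, fun y hy => ?_⟩
      rw [hlapp, hlapp, heq]
      have := hy.2 S
      linarith
  have hFne : (l.toExposed (core m)).Nonempty := ⟨v₀, by rw [hF]; exact ⟨hv₀, hv₀S⟩⟩
  have hFcl : IsClosed (l.toExposed (core m)) := by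
    rw [hF]
    exact (core_isClosed m).inter (isClosed_eq (by fun_prop) continuous_const)
  have hFcomp : IsCompact (l.toExposed (core m)) :=
    (core_isCompact m hstd).of_isClosed_subset hFcl (by rw [hF]; exact fun x hx => hx.1)
  obtain ⟨w, hw⟩ := hFcomp.extremePoints_nonempty hFne
  refine ⟨w, hexp.isExtreme.extremePoints_subset_extremePoints hw, ?_⟩
  have := hw.1
  rw [hF] at this
  exact this.2

lemma extreme_no_indistinct (m : Finset N → ℝ) {v : N → ℝ}
    (hv : v ∈ Set.extremePoints ℝ (core m)) {i j : N} (hij : i ≠ j)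
    (h : ∀ T : Finset N, (∑ k ∈ T, v k = m T) → (i ∈ T ↔ j ∈ T)) : False := by
  classical
  set d : N → ℝ := fun k => (if k = i then (1:ℝ) else 0) - (if k = j then 1 else 0) with hd
  have hsumd : ∀ T : Finset N, ∑ k ∈ T, d k =
      (if i ∈ T then (1:ℝ) else 0) - (if j ∈ T then 1 else 0) := by
    intro T
    simp only [hd, Finset.sum_sub_distrib]
    rw [Finset.sum_ite_eq' T i (fun _ => (1:ℝ)), Finset.sum_ite_eq' T j (fun _ => (1:ℝ))]
  set ε : ℝ := Finset.univ.inf' (Finset.univ_nonempty : (Finset.univ : Finset (Finset N)).Nonempty)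
      (fun T : Finset N => if ∑ k ∈ T, v k = m T then 1 else ∑ k ∈ T, v k - m T) with he
  have hεpos : 0 < ε := by
    rw [he, Finset.lt_inf'_iff]
    intro T _
    split_ifs with h'
    · norm_num
    · have h2 := hv.1.2 T
      exact sub_pos.mpr (lt_of_le_of_ne h2 fun heq => h' heq.symm)
  have hεle : ∀ T : Finset N, ∑ k ∈ T, v k ≠ m T → ε ≤ ∑ k ∈ T, v k - m T := by
    intro T hT
    have := Finset.inf'_le
      (fun T : Finset N => if ∑ k ∈ T, v k = m T then 1 else ∑ k ∈ T, v k - m T)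
      (Finset.mem_univ T)
    rw [if_neg hT] at this
    rw [he]
    exact this
  have hmem : ∀ s : ℝ, |s| ≤ ε → (fun k => v k + s * d k) ∈ core m := by
    intro s hs
    have habs := abs_le.1 hs
    constructor
    · have hsplit : ∑ k, (v k + s * d k) = ∑ k, v k + s * ∑ k, d k := by
        rw [Finset.sum_add_distrib, Finset.mul_sum]
      rw [hsplit, hsumd]
      simp only [Finset.mem_univ, if_pos]
      rw [sub_self, mul_zero, add_zero]
      exact hv.1.1
    · intro T
      have hsplit : ∑ k ∈ T, (v k + s * d k) = ∑ k ∈ T, v k + s * ∑ k ∈ T, d k := by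
        rw [Finset.sum_add_distrib, Finset.mul_sum]
      by_cases hT : ∑ k ∈ T, v k = m T
      · have hiff := h T hT
        have hzero : ∑ k ∈ T, d k = 0 := by
          rw [hsumd]
          by_cases hi : i ∈ T
          · rw [if_pos hi, if_pos (hiff.mp hi), sub_self]
          · rw [if_neg hi, if_neg (fun hj => hi (hiff.mpr hj)), sub_self]
        rw [hsplit, hzero, mul_zero, add_zero, hT]
      · have h1 : ε ≤ ∑ k ∈ T, v k - m T := hεle T hT
        have h2 : |s * ∑ k ∈ T, d k| ≤ ε := by
          rw [abs_mul]
          calc |s| * |∑ k ∈ T, d k| ≤ ε * 1 := by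
                apply mul_le_mul hs ?_ (abs_nonneg _) hεpos.le
                rw [hsumd]; split_ifs <;> norm_num
            _ = ε := mul_one ε
        have h3 := (abs_le.1 h2).1
        have := hv.1.2 T
        rw [hsplit]
        linarith
  have hx := hmem (-ε) (by rw [abs_neg, abs_of_pos hεpos])
  have hy := hmem ε (by rw [abs_of_pos hεpos])
  have hseg : v ∈ openSegment ℝ (fun k => v k + (-ε) * d k) (fun k => v k + ε * d k) := by
    refine ⟨1/2, 1/2, by norm_num, by norm_num, by norm_num, ?_⟩
    funext k
    simp only [Pi.add_apply, Pi.smul_apply, smul_eq_mul]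
    ring
  have heq := (hv.2 hx hy hseg)
  have heqi := congrFun heq i
  have hdi : d i = 1 := by simp [hd, hij]
  simp only [hdi, mul_one] at heqi
  linarith [heqi, hεpos]

lemma inf_prop (P : Finset N → Prop) (htop : P Finset.univ)
    (hinter : ∀ A B, P A → P B → P (A ∩ B)) (s : Finset (Finset N))
    (hs : ∀ T ∈ s, P T) : P (s.inf id) := by
  classical
  induction s using Finset.induction_on with
  | empty => simpa [Finset.inf_empty, Finset.top_eq_univ] using htop
  | insert _ _ hA ih =>
      rw [Finset.inf_insert]
      exact hinter _ _ (hs _ (Finset.mem_insert_self _ _))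
        (ih fun T hT => hs T (Finset.mem_insert_of_mem hT))

lemma sup_prop (P : Finset N → Prop) (hbot : P ∅)
    (hunion : ∀ A B, P A → P B → P (A ∪ B)) (s : Finset (Finset N))
    (hs : ∀ T ∈ s, P T) : P (s.sup id) := by
  classical
  induction s using Finset.induction_on with
  | empty => simpa [Finset.sup_empty, Finset.bot_eq_empty] using hbot
  | insert _ _ hA ih =>
      rw [Finset.sup_insert]
      exact hunion _ _ (hs _ (Finset.mem_insert_self _ _))
        (ih fun T hT => hs T (Finset.mem_insert_of_mem hT))

lemma mem_inf_id (i : N) (s : Finset (Finset N)) (hs : ∀ T ∈ s, i ∈ T) :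
    i ∈ s.inf id := by
  classical
  induction s using Finset.induction_on with
  | empty => simp [Finset.inf_empty, Finset.top_eq_univ]
  | insert _ _ hA ih =>
      rw [Finset.inf_insert]
      exact Finset.mem_inter.2 ⟨hs _ (Finset.mem_insert_self _ _),
        ih fun T hT => hs T (Finset.mem_insert_of_mem hT)⟩

lemma extreme_coord_int (m : Finset N → ℝ) (hsup : Supermod m)
    (hstd : ∀ S : Finset N, S.card ≤ 1 → m S = 0)
    (hint : ∀ S : Finset N, ∃ z : ℤ, m S = z)
    {v : N → ℝ} (hv : v ∈ Set.extremePoints ℝ (core m)) (i : N) :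
    ∃ z : ℤ, v i = z := by
  classical
  have hvc : v ∈ core m := hv.1
  set tight : Finset N → Prop := fun T => ∑ k ∈ T, v k = m T with htight
  have hclI : ∀ A B, tight A → tight B → tight (A ∩ B) ∧ tight (A ∪ B) := by
    intro A B hA hB
    have hsum : ∑ k ∈ A ∪ B, v k + ∑ k ∈ A ∩ B, v k = ∑ k ∈ A, v k + ∑ k ∈ B, v k :=
      Finset.sum_union_inter
    have h1 := hvc.2 (A ∪ B)
    have h2 := hvc.2 (A ∩ B)
    have h3 := hsup A B
    simp only [htight] at hA hB ⊢
    constructor <;> linarith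
  have htuniv : tight Finset.univ := hvc.1
  have htempty : tight ∅ := by
    simp [htight, hstd ∅ (by simp)]
  set s₁ : Finset (Finset N) := Finset.univ.filter (fun T => tight T ∧ i ∈ T) with hs₁
  set s₂ : Finset (Finset N) := Finset.univ.filter (fun T => tight T ∧ i ∉ T) with hs₂
  set A : Finset N := s₁.inf id with hA
  set B : Finset N := s₂.sup id with hB
  have htA : tight A :=
    inf_prop tight htuniv (fun X Y hX hY => (hclI X Y hX hY).1) s₁
      (fun T hT => ((Finset.mem_filter.1 hT).2).1)
  have htB : tight B :=
    sup_prop tight htempty (fun X Y hX hY => (hclI X Y hX hY).2) s₂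
      (fun T hT => ((Finset.mem_filter.1 hT).2).1)
  have hiA : i ∈ A :=
    mem_inf_id i s₁ (fun T hT => ((Finset.mem_filter.1 hT).2).2)
  have hiB : i ∉ B := by
    intro hmem
    rw [hB, Finset.mem_sup] at hmem
    obtain ⟨T, hT, hiT⟩ := hmem
    exact ((Finset.mem_filter.1 hT).2).2 hiT
  have hAB : ∀ j ∈ A, j ≠ i → j ∈ B := by
    intro j hjA hji
    by_contra hjB
    apply extreme_no_indistinct m hv hji.symm
    intro T hT
    constructor
    · intro hiT
      have : A ⊆ T := by
        have : T ∈ s₁ := Finset.mem_filter.2 ⟨Finset.mem_univ _, hT, hiT⟩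
        simpa [hA] using Finset.inf_le (f := id) this
      exact this hjA
    · intro hjT
      by_contra hiT
      apply hjB
      have : T ⊆ B := by
        have : T ∈ s₂ := Finset.mem_filter.2 ⟨Finset.mem_univ _, hT, hiT⟩
        simpa [hB] using Finset.le_sup (f := id) this
      exact this hjT
  have hAiB : A ∩ B = A.erase i := by
    ext k
    simp only [Finset.mem_inter, Finset.mem_erase]
    constructor
    · rintro ⟨hkA, hkB⟩
      exact ⟨fun hk => hiB (hk ▸ hkB), hkA⟩
    · rintro ⟨hki, hkA⟩
      exact ⟨hkA, hAB k hkA hki⟩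
  have htAe : tight (A.erase i) := by
    rw [← hAiB]; exact (hclI A B htA htB).1
  have hvi : v i = m A - m (A.erase i) := by
    have := Finset.sum_erase_add A v hiA
    simp only [htight] at htA htAe
    linarith
  obtain ⟨z₁, hz₁⟩ := hint A
  obtain ⟨z₂, hz₂⟩ := hint (A.erase i)
  exact ⟨z₁ - z₂, by rw [hvi, hz₁, hz₂]; push_cast; ring⟩

end CoreFacts

/-- For a standardized supermodular game `m`, all vertices of the core are 0–1 vectors
iff `m` is integer-valued and `m(N) - m(N∖{i}) ≤ 1` for every `i`. -/
theorem stmt13 {N : Type*} [Fintype N] [DecidableEq N]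
    (m : Finset N → ℝ) (hsup : Supermod m)
    (hstd : ∀ S : Finset N, S.card ≤ 1 → m S = 0) :
    (((core m).Nonempty →
        (∀ v ∈ Set.extremePoints ℝ (core m), ∀ i : N, v i = 0 ∨ v i = 1) →
        (∀ S : Finset N, ∃ z : ℤ, m S = z) ∧
          ∀ i : N, m Finset.univ - m (Finset.univ.erase i) ≤ 1)) ∧
    ((∀ S : Finset N, ∃ z : ℤ, m S = z) →
      (∀ i : N, m Finset.univ - m (Finset.univ.erase i) ≤ 1) →
      ∀ v ∈ Set.extremePoints ℝ (core m), ∀ i : N, v i = 0 ∨ v i = 1) := by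
  classical
  have h0 : m ∅ = 0 := hstd ∅ (by simp)
  have hexists : ∀ S : Finset N, ∃ v ∈ core m, ∑ i ∈ S, v i = m S := by
    intro S
    set l : List N := Sᶜ.toList ++ S.toList with hl
    have hnd : l.Nodup := by
      refine List.Nodup.append (Finset.nodup_toList _) (Finset.nodup_toList _) ?_
      intro a ha ha'
      exact (Finset.mem_compl.1 (Finset.mem_toList.1 ha)) (Finset.mem_toList.1 ha')
    have htf : l.toFinset = Finset.univ := by
      rw [hl, List.toFinset_append, Finset.toList_toFinset, Finset.toList_toFinset]
      ext x
      simp only [Finset.mem_union, Finset.mem_compl, Finset.mem_univ, iff_true]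
      exact em' (x ∈ S)
    refine ⟨marg m l, ⟨?_, ?_⟩, ?_⟩
    · have := marg_sum m l hnd
      rw [htf, h0] at this
      simpa using this
    · intro T
      have := marg_core_ineq m hsup h0 l hnd T
      rwa [htf, Finset.inter_univ] at this
    · have hS : ∀ i ∈ S, marg m l i = marg m S.toList i := by
        intro i hi
        exact marg_append m _ _ i
          (fun h => (Finset.mem_compl.1 (Finset.mem_toList.1 h)) hi)
      rw [Finset.sum_congr rfl hS]
      have := marg_sum m S.toList (Finset.nodup_toList S)
      rw [Finset.toList_toFinset, h0] at this
      simpa using this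
  constructor
  · intro _ h01
    constructor
    · intro S
      obtain ⟨w, hwe, hws⟩ := exists_extreme_sum_eq m hstd S (hexists S)
      refine ⟨∑ i ∈ S, (if w i = 1 then (1:ℤ) else 0), ?_⟩
      rw [← hws]
      push_cast
      refine Finset.sum_congr rfl fun i _ => ?_
      rcases h01 w hwe i with h | h <;> simp [h]
    · intro i
      obtain ⟨w, hwe, hws⟩ := exists_extreme_sum_eq m hstd (Finset.univ.erase i)
        (hexists _)
      have h1 : ∑ j ∈ Finset.univ.erase i, w j + w i = ∑ j, w j :=
        Finset.sum_erase_add _ _ (Finset.mem_univ i)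
      have h2 := hwe.1.1
      rcases h01 w hwe i with h | h <;> rw [hws] at h1 <;> linarith
  · intro hint hmarg v hv i
    obtain ⟨z, hz⟩ := extreme_coord_int m hsup hstd hint hv i
    have h0le := core_nonneg hstd hv.1 i
    have hle1 : v i ≤ 1 := by
      have h1 : ∑ j ∈ Finset.univ.erase i, v j + v i = ∑ j, v j :=
        Finset.sum_erase_add _ _ (Finset.mem_univ i)
      have h2 := hv.1.1
      have h3 := hv.1.2 (Finset.univ.erase i)
      have h4 := hmarg i
      linarith
    rw [hz] at h0le hle1 ⊢
    have hz01 : z = 0 ∨ z = 1 := by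
      have hh1 : (0:ℤ) ≤ z := by exact_mod_cast h0le
      have hh2 : z ≤ 1 := by exact_mod_cast hle1
      omega
    rcases hz01 with rfl | rfl <;> simp
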